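/- Let V be a finite-dimensional real inner product space, let Δ ⊆ V be a closed convex set with 0 ∈ Δ, and let ∇ := {x ∈ V | ⟨u, x⟩ ≥ −1 for all u ∈ Δ} be its polar. Equip V × ℝ with the inner product ⟨(v, s), (x, t)⟩ = ⟨v, x⟩ + s·t, and for a set S ⊆ V define the closed cone C(S) := closure({r•(v, 1) | r ≥ 0, v ∈ S}) ⊆ V × ℝ. Then C(∇) equals the dual cone of C(Δ), i.e., C(∇) = {(x, t) ∈ V × ℝ | ⟨w, x⟩ + s·t ≥ 0 for all (w, s) ∈ C(Δ)}. -/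

import Mathlib

open RealInnerProductSpace

/-- The closed cone over a set `S ⊆ V` at height `1` in `V × ℝ`:
`C(S) = closure{r • (v, 1) | r ≥ 0, v ∈ S}`. -/
def closedConeOver {V : Type*} [NormedAddCommGroup V] [InnerProductSpace ℝ V]
    (S : Set V) : Set (V × ℝ) :=
  closure {p : V × ℝ | ∃ r : ℝ, 0 ≤ r ∧ ∃ v ∈ S, p = r • ((v, 1) : V × ℝ)}

/-- **(4.1 dualPol).** For a closed convex set `Δ ∋ 0` with polar `∇`, the cone
`C(∇)` is the dual cone of `C(Δ)` with respect to the product pairing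
`⟨(v,s),(x,t)⟩ = ⟨v,x⟩ + s·t` on `V × ℝ`. -/
theorem closedConeOver_polar_eq_dualCone
    {V : Type*} [NormedAddCommGroup V] [InnerProductSpace ℝ V]
    [FiniteDimensional ℝ V]
    (Δ : Set V) (hcl : IsClosed Δ) (hconv : Convex ℝ Δ) (h0 : (0 : V) ∈ Δ) :
    closedConeOver {x : V | ∀ u ∈ Δ, ⟪u, x⟫ ≥ -1} =
      {q : V × ℝ | ∀ p ∈ closedConeOver Δ, ⟪p.1, q.1⟫ + p.2 * q.2 ≥ 0} := by
  set Pol : Set V := {x : V | ∀ u ∈ Δ, ⟪u, x⟫ ≥ -1} with hPol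
  set genΔ : Set (V × ℝ) :=
    {p : V × ℝ | ∃ r : ℝ, 0 ≤ r ∧ ∃ v ∈ Δ, p = r • ((v, 1) : V × ℝ)} with hgenΔ
  have contf : ∀ q : V × ℝ, Continuous fun p : V × ℝ => ⟪p.1, q.1⟫ + p.2 * q.2 := by
    intro q
    exact ((continuous_fst.inner continuous_const).add
      (continuous_snd.mul continuous_const))
  have contg : ∀ p : V × ℝ, Continuous fun q : V × ℝ => ⟪p.1, q.1⟫ + p.2 * q.2 := by
    intro p
    exact ((continuous_const.inner continuous_fst).add
      (continuous_const.mul continuous_snd))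
  apply Set.Subset.antisymm
  · -- C(∇) ⊆ dual
    have hDclosed : IsClosed {q : V × ℝ | ∀ p ∈ closedConeOver Δ, ⟪p.1, q.1⟫ + p.2 * q.2 ≥ 0} := by
      have : {q : V × ℝ | ∀ p ∈ closedConeOver Δ, ⟪p.1, q.1⟫ + p.2 * q.2 ≥ 0} =
          ⋂ p ∈ closedConeOver Δ, {q : V × ℝ | 0 ≤ ⟪p.1, q.1⟫ + p.2 * q.2} := by
        ext q; simp [ge_iff_le]
      rw [this]
      exact isClosed_biInter fun p _ => isClosed_le continuous_const (contg p)
    refine closure_minimal ?_ hDclosed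
    rintro q ⟨r, hr, v, hv, rfl⟩ p hp
    -- show 0 ≤ pairing for all p in closure of genΔ
    have key : closure genΔ ⊆
        {p : V × ℝ | 0 ≤ ⟪p.1, (r • ((v, 1) : V × ℝ)).1⟫ + p.2 * (r • ((v, 1) : V × ℝ)).2} := by
      refine closure_minimal ?_ (isClosed_le continuous_const (contf _))
      rintro p ⟨r', hr', u, hu, rfl⟩
      simp only [Set.mem_setOf_eq, Prod.smul_fst, Prod.smul_snd, smul_eq_mul, mul_one]
      rw [real_inner_smul_left, real_inner_smul_right]
      have huv : (-1 : ℝ) ≤ ⟪u, v⟫ := hv u hu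
      nlinarith [mul_nonneg hr' hr]
    exact key hp
  · -- dual ⊆ C(∇)
    rintro ⟨x, t⟩ hq
    have hgen : ∀ u ∈ Δ, ((u, 1) : V × ℝ) ∈ closedConeOver Δ := by
      intro u hu
      exact subset_closure ⟨1, zero_le_one, u, hu, by simp⟩
    have ht : 0 ≤ t := by
      have := hq ((0 : V), 1) (hgen 0 h0)
      simpa using this
    have hux : ∀ u ∈ Δ, ⟪u, x⟫ + t ≥ 0 := by
      intro u hu
      have := hq ((u, 1) : V × ℝ) (hgen u hu)
      simpa using this
    rcases eq_or_lt_of_le ht with heq | hpos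
    · -- t = 0 : (x,0) is a limit of (x, 1/(n+1))
      subst heq
      have hx0 : ∀ u ∈ Δ, 0 ≤ ⟪u, x⟫ := by
        intro u hu; simpa using hux u hu
      have hmem : ∀ n : ℕ, ((x, 1 / ((n : ℝ) + 1)) : V × ℝ) ∈
          {p : V × ℝ | ∃ r : ℝ, 0 ≤ r ∧ ∃ v ∈ Pol, p = r • ((v, 1) : V × ℝ)} := by
        intro n
        have hn : (0 : ℝ) < (n : ℝ) + 1 := by positivity
        refine ⟨1 / ((n : ℝ) + 1), by positivity, ((n : ℝ) + 1) • x, ?_, ?_⟩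
        · intro u hu
          rw [real_inner_smul_right]
          have := hx0 u hu
          nlinarith
        · refine Prod.ext ?_ ?_
          · simp [smul_smul, hn.ne']
          · simp
      refine mem_closure_of_tendsto (f := fun n : ℕ => ((x, 1 / ((n : ℝ) + 1)) : V × ℝ))
        (b := Filter.atTop) ?_ (Filter.Eventually.of_forall hmem)
      have h2 : Filter.Tendsto (fun n : ℕ => 1 / ((n : ℝ) + 1)) Filter.atTop (nhds 0) :=
        tendsto_one_div_add_atTop_nhds_zero_nat
      exact (tendsto_const_nhds.prodMk_nhds h2)
    · -- t > 0 : (x,t) = t • (t⁻¹ • x, 1)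
      refine subset_closure ⟨t, ht, t⁻¹ • x, ?_, ?_⟩
      · intro u hu
        rw [real_inner_smul_right]
        have := hux u hu
        have hti : 0 < t⁻¹ := inv_pos.mpr hpos
        rw [ge_iff_le, ← sub_nonneg]
        have : t⁻¹ * ⟪u, x⟫ - (-1) = t⁻¹ * (⟪u, x⟫ + t) := by
          field_simp
          ring
        rw [this]
        positivity
      · refine Prod.ext ?_ ?_
        · simp [smul_smul, hpos.ne']
        · simp
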